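/- Assume C is functorially finite in mod Λ and has enough C-projectives and enough C-injectives. Then S(C) and F(C) are functorially finite subcategories of the arrow category of mod Λ: every morphism of finite-dimensional Λ-modules admits both a right and a left S(C)-approximation, and both a right and a left F(C)-approximation, in the arrow category of mod Λ. -/

import Mathlib

open CategoryTheory CategoryTheory.Limits

universe u

section Defs
variable {Λ : Type u} [Ring Λ]

/-- A short exact sequence `0 → X → Y → Z → 0` of Λ-modules. -/
def ShortExactSeq {X Y Z : ModuleCat.{u} Λ} (f : X ⟶ Y) (g : Y ⟶ Z) : Prop :=
  Function.Injective f ∧ Function.Surjective g ∧ Function.Exact f g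

variable (C : Set (ModuleCat.{u} Λ))

/-- An inflation of the exact category `C`: an injective map between objects of `C`
whose cokernel lies in `C`. -/
def IsInflation {X Y : ModuleCat.{u} Λ} (f : X ⟶ Y) : Prop :=
  X ∈ C ∧ Y ∈ C ∧ Function.Injective f ∧ ∃ Z ∈ C, ∃ g : Y ⟶ Z, ShortExactSeq f g

/-- A deflation of the exact category `C`: a surjective map between objects of `C`
whose kernel lies in `C`. -/
def IsDeflation {X Y : ModuleCat.{u} Λ} (f : X ⟶ Y) : Prop :=
  X ∈ C ∧ Y ∈ C ∧ Function.Surjective f ∧ ∃ Z ∈ C, ∃ g : Z ⟶ X, ShortExactSeq g f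

/-- The monomorphism category `S(C)`, as a subcategory of the arrow category. -/
def SMono : Set (Arrow (ModuleCat.{u} Λ)) := {a | IsInflation C a.hom}

/-- The epimorphism category `F(C)`, as a subcategory of the arrow category. -/
def FEpi : Set (Arrow (ModuleCat.{u} Λ)) := {a | IsDeflation C a.hom}

/-- `I` is a `C`-injective object. -/
def CInjective (I : ModuleCat.{u} Λ) : Prop :=
  I ∈ C ∧ ∀ (U V : ModuleCat.{u} Λ), U ∈ C → V ∈ C →
    ∀ (f : I ⟶ U) (g : U ⟶ V), ShortExactSeq f g → ∃ r : U ⟶ I, f ≫ r = 𝟙 I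

/-- `P` is a `C`-projective object. -/
def CProjective (P : ModuleCat.{u} Λ) : Prop :=
  P ∈ C ∧ ∀ (U V : ModuleCat.{u} Λ), U ∈ C → V ∈ C →
    ∀ (f : U ⟶ V) (g : V ⟶ P), ShortExactSeq f g → ∃ s : P ⟶ V, s ≫ g = 𝟙 P

/-- `C` has enough `C`-injectives. -/
def EnoughCInjectives : Prop :=
  ∀ X ∈ C, ∃ (I X' : ModuleCat.{u} Λ), CInjective C I ∧ X' ∈ C ∧
    ∃ (e : X ⟶ I) (q : I ⟶ X'), ShortExactSeq e q

/-- `C` has enough `C`-projectives. -/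
def EnoughCProjectives : Prop :=
  ∀ X ∈ C, ∃ (P X' : ModuleCat.{u} Λ), CProjective C P ∧ X' ∈ C ∧
    ∃ (q : X' ⟶ P) (p : P ⟶ X), ShortExactSeq q p

def ClosedUnderIso : Prop := ∀ (M N : ModuleCat.{u} Λ), (M ≅ N) → M ∈ C → N ∈ C
def ContainsZero : Prop := ∀ M : ModuleCat.{u} Λ, Subsingleton M → M ∈ C
def ClosedUnderSums : Prop := ∀ M N : ModuleCat.{u} Λ, M ∈ C → N ∈ C → (M ⊞ N) ∈ C
def ClosedUnderExtensions : Prop :=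
  ∀ (X Y Z : ModuleCat.{u} Λ) (f : X ⟶ Y) (g : Y ⟶ Z),
    X ∈ C → Z ∈ C → ShortExactSeq f g → Y ∈ C

end Defs

section Approx
variable {A : Type*} [Category A] (D : Set A)

/-- `g : Y ⟶ Z` is a right `D`-approximation of `Z`. -/
def IsRightApprox {Y Z : A} (g : Y ⟶ Z) : Prop :=
  Y ∈ D ∧ ∀ W ∈ D, ∀ u : W ⟶ Z, ∃ v : W ⟶ Y, v ≫ g = u

/-- `g : Z ⟶ Y` is a left `D`-approximation of `Z`. -/
def IsLeftApprox {Z Y : A} (g : Z ⟶ Y) : Prop :=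
  Y ∈ D ∧ ∀ W ∈ D, ∀ u : Z ⟶ W, ∃ v : Y ⟶ W, g ≫ v = u

end Approx

section Finiteness
variable {Λ : Type u} [Ring Λ]

/-- Contravariant finiteness of `C` in `mod Λ` (the finite-dimensional Λ-modules). -/
def ContravariantlyFinite (C : Set (ModuleCat.{u} Λ)) : Prop :=
  ∀ M : ModuleCat.{u} Λ, Module.Finite Λ M →
    ∃ (Y : ModuleCat.{u} Λ) (g : Y ⟶ M), IsRightApprox C g

/-- Covariant finiteness of `C` in `mod Λ`. -/
def CovariantlyFinite (C : Set (ModuleCat.{u} Λ)) : Prop :=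
  ∀ M : ModuleCat.{u} Λ, Module.Finite Λ M →
    ∃ (Y : ModuleCat.{u} Λ) (g : M ⟶ Y), IsLeftApprox C g

end Finiteness

section Helpers
variable {Λ : Type u} [Ring Λ] {C : Set (ModuleCat.{u} Λ)}

instance homToLinearMapCoe {M N : ModuleCat.{u} Λ} : Coe (M ⟶ N) (↑M →ₗ[Λ] ↑N) :=
  ⟨ModuleCat.Hom.hom⟩

lemma hom_app_eq {M N : ModuleCat.{u} Λ} {f g : M ⟶ N} (h : f = g) (x : ↥M) :
    f x = g x := by rw [h]

lemma prodMem (hCiso : ClosedUnderIso C) (hCsum : ClosedUnderSums C)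
    {M N : ModuleCat.{u} Λ} (hM : M ∈ C) (hN : N ∈ C) :
    ModuleCat.of Λ (↥M × ↥N) ∈ C :=
  hCiso _ _ (ModuleCat.biprodIsoProd M N) (hCsum M N hM hN)

lemma finSub (k : Type u) [Field k] [Algebra k Λ] [FiniteDimensional k Λ]
    {M : Type u} [AddCommGroup M] [Module Λ M] (hM : Module.Finite Λ M)
    (S : Submodule Λ M) : Module.Finite Λ ↥S := by
  letI : Module k M := Module.compHom M (algebraMap k Λ)
  haveI : IsScalarTower k Λ M :=
    ⟨fun a l m => by
      show (a • l) • m = algebraMap k Λ a • l • m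
      rw [Algebra.smul_def, mul_smul]⟩
  haveI : Module.Finite k M := Module.Finite.trans Λ M
  haveI : IsNoetherian k M := IsNoetherian.iff_fg.2 ‹_›
  haveI : IsNoetherian Λ M := isNoetherian_of_tower k ‹_›
  exact Module.Finite.iff_fg.2 (IsNoetherian.noetherian S)

/-- short exact sequence onto the quotient by the range of an injective map -/
lemma ses_mkQ {M N : Type u} [AddCommGroup M] [AddCommGroup N] [Module Λ M] [Module Λ N]
    (φ : M →ₗ[Λ] N) (hφ : Function.Injective φ) :
    ShortExactSeq (ModuleCat.ofHom φ)
      (ModuleCat.ofHom (LinearMap.range φ).mkQ :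
        ModuleCat.of Λ N ⟶ ModuleCat.of Λ (N ⧸ LinearMap.range φ)) := by
  refine ⟨hφ, Submodule.mkQ_surjective _, fun y => ?_⟩
  rw [Set.mem_range]
  show Submodule.Quotient.mk y = 0 ↔ _
  rw [Submodule.Quotient.mk_eq_zero, LinearMap.mem_range]
  rfl

/-- short exact sequence of the kernel of a surjective map -/
lemma ses_ker {N M : Type u} [AddCommGroup M] [AddCommGroup N] [Module Λ M] [Module Λ N]
    (φ : N →ₗ[Λ] M) (hs : Function.Surjective φ) :
    ShortExactSeq (ModuleCat.ofHom (LinearMap.ker φ).subtype :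
        ModuleCat.of Λ ↥(LinearMap.ker φ) ⟶ ModuleCat.of Λ N) (ModuleCat.ofHom φ) := by
  refine ⟨Submodule.injective_subtype _, hs, fun y => ?_⟩
  constructor
  · intro hy
    exact ⟨⟨y, hy⟩, rfl⟩
  · rintro ⟨⟨z, hz⟩, rfl⟩
    exact hz

/-- factor a map through a surjective map whose kernel it kills -/
lemma factorSurj {A B D : Type u} [AddCommGroup A] [AddCommGroup B] [AddCommGroup D]
    [Module Λ A] [Module Λ B] [Module Λ D]
    (g : A →ₗ[Λ] B) (hg : Function.Surjective g) (φ : A →ₗ[Λ] D)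
    (h : ∀ a, g a = 0 → φ a = 0) : ∃ ψ : B →ₗ[Λ] D, ψ.comp g = φ := by
  have hker : LinearMap.ker g ≤ LinearMap.ker φ := fun a ha => h a ha
  let e := g.quotKerEquivOfSurjective hg
  refine ⟨((LinearMap.ker g).liftQ φ hker).comp e.symm.toLinearMap, ?_⟩
  ext a
  have h1 : e (Submodule.Quotient.mk a) = g a := rfl
  have h2 : e.symm (g a) = Submodule.Quotient.mk a := by
    apply e.injective; rw [e.apply_symm_apply, h1]
  show ((LinearMap.ker g).liftQ φ hker) (e.symm (g a)) = φ a
  rw [h2]; rfl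

/-- factor a map through an injective map containing its range -/
lemma factorInj {A B S : Type u} [AddCommGroup A] [AddCommGroup B] [AddCommGroup S]
    [Module Λ A] [Module Λ B] [Module Λ S]
    (m : A →ₗ[Λ] B) (hm : Function.Injective m) (φ : S →ₗ[Λ] B)
    (h : ∀ s, φ s ∈ LinearMap.range m) : ∃ v : S →ₗ[Λ] A, m.comp v = φ := by
  let e := LinearEquiv.ofInjective m hm
  refine ⟨e.symm.toLinearMap.comp (φ.codRestrict (LinearMap.range m) h), ?_⟩
  ext s
  show m (e.symm (φ.codRestrict (LinearMap.range m) h s)) = φ s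
  have key : ∀ z : LinearMap.range m, m (e.symm z) = ↑z := by
    intro z
    conv_rhs => rw [← e.apply_symm_apply z]
    rfl
  rw [key]; rfl

/-- Extend a map to a C-injective along an inflation. -/
lemma extendAlongInflation (hCext : ClosedUnderExtensions C)
    {I A B Z : ModuleCat.{u} Λ} (hI : CInjective C I)
    (hZ : Z ∈ C)
    (u : A ⟶ B) (σ : B ⟶ Z) (hse : ShortExactSeq u σ) (t : A ⟶ I) :
    ∃ w : B ⟶ I, u ≫ w = t := by
  obtain ⟨hu, hσ, hex⟩ := hse
  set φ : ↥A →ₗ[Λ] ↥B × ↥I := LinearMap.prod u (-(t : ↥A →ₗ[Λ] ↥I)) with hφ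
  have hφa : ∀ a : ↥A, φ a = (u a, -(t a)) := fun a => rfl
  set W : Submodule Λ (↥B × ↥I) := LinearMap.range φ with hWdef
  let D : ModuleCat.{u} Λ := ModuleCat.of Λ ((↥B × ↥I) ⧸ W)
  let ι : I ⟶ D := ModuleCat.ofHom (W.mkQ.comp (LinearMap.inr Λ ↥B ↥I))
  have hσu : ∀ a : ↥A, σ (u a) = 0 := fun a => (hex (u a)).mpr ⟨a, rfl⟩
  have hkill : ∀ x ∈ W, ((σ : ↥B →ₗ[Λ] ↥Z).comp (LinearMap.fst Λ ↥B ↥I)) x = 0 := by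
    rintro x ⟨a, rfl⟩
    exact hσu a
  let π : D ⟶ Z := ModuleCat.ofHom (W.liftQ ((σ : ↥B →ₗ[Λ] ↥Z).comp (LinearMap.fst Λ ↥B ↥I)) hkill)
  have hιinj : Function.Injective ι := by
    intro i i' hii
    have hmem : ((0 : ↥B), i) - ((0 : ↥B), i') ∈ W := (Submodule.Quotient.eq W).mp hii
    obtain ⟨a, ha⟩ := hmem
    rw [hφa a] at ha
    have ha1 : u a = 0 := by
      have := congrArg Prod.fst ha; simpa using this
    have ha0 : a = 0 := hu (by simpa using ha1)
    have ha2 : -(t a) = i - i' := by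
      have := congrArg Prod.snd ha; simpa using this
    rw [ha0] at ha2
    simp at ha2
    linear_combination (norm := abel) -ha2
  have hπsurj : Function.Surjective π := by
    intro z
    obtain ⟨b, rfl⟩ := hσ z
    exact ⟨Submodule.Quotient.mk (b, 0), rfl⟩
  have hexact : Function.Exact ι π := by
    intro d
    obtain ⟨⟨b, i⟩, rfl⟩ := Submodule.Quotient.mk_surjective W d
    constructor
    · intro hd
      have hb : σ b = 0 := hd
      obtain ⟨a, ha⟩ := (hex b).mp hb
      refine ⟨i + t a, ?_⟩
      show Submodule.Quotient.mk ((0 : ↥B), i + t a) = Submodule.Quotient.mk (b, i)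
      rw [Submodule.Quotient.eq]
      refine ⟨-a, ?_⟩
      rw [hφa (-a)]
      apply Prod.ext
      · show u (-a) = 0 - b
        rw [map_neg, ha]; abel
      · show -(t (-a)) = (i + t a) - i
        rw [map_neg]; abel
    · rintro ⟨i', hi⟩
      rw [← hi]
      show σ 0 = 0
      exact map_zero _
  have hD : D ∈ C := hCext I D Z ι π hI.1 hZ ⟨hιinj, hπsurj, hexact⟩
  obtain ⟨r, hr⟩ := hI.2 D Z hD hZ ι π ⟨hιinj, hπsurj, hexact⟩
  refine ⟨ModuleCat.ofHom ((r.hom : ↥D →ₗ[Λ] ↥I).comp (W.mkQ.comp (LinearMap.inl Λ ↥B ↥I))), ?_⟩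
  ext a
  show r (Submodule.Quotient.mk (u a, 0)) = t a
  have hmk : (Submodule.Quotient.mk (u a, (0 : ↥I)) : (↥B × ↥I) ⧸ W)
      = Submodule.Quotient.mk (0, t a) := by
    rw [Submodule.Quotient.eq]
    refine ⟨a, ?_⟩
    rw [hφa a]
    apply Prod.ext
    · show u a = u a - 0; abel
    · show -(t a) = 0 - t a; abel
  rw [hmk]
  exact hom_app_eq hr (t a)

/-- Lift a map from a C-projective along a deflation. -/
lemma liftAlongDeflation (hCext : ClosedUnderExtensions C)
    {P A B K : ModuleCat.{u} Λ} (hP : CProjective C P)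
    (hK : K ∈ C)
    (ιK : K ⟶ A) (m : A ⟶ B) (hse : ShortExactSeq ιK m) (t : P ⟶ B) :
    ∃ r : P ⟶ A, r ≫ m = t := by
  obtain ⟨hι, hm, hex⟩ := hse
  set δ : ↥A × ↥P →ₗ[Λ] ↥B :=
    ((m : ↥A →ₗ[Λ] ↥B).comp (LinearMap.fst Λ ↥A ↥P)) -
      ((t : ↥P →ₗ[Λ] ↥B).comp (LinearMap.snd Λ ↥A ↥P)) with hδ
  have hδa : ∀ x : ↥A × ↥P, δ x = m x.1 - t x.2 := fun x => rfl
  set E : Submodule Λ (↥A × ↥P) := LinearMap.ker δ with hEdef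
  let EM : ModuleCat.{u} Λ := ModuleCat.of Λ ↥E
  have hmι : ∀ kk : ↥K, m (ιK kk) = 0 := fun kk => (hex (ιK kk)).mpr ⟨kk, rfl⟩
  let κ : K ⟶ EM := ModuleCat.ofHom
    ((LinearMap.prod (ιK : ↥K →ₗ[Λ] ↥A) 0).codRestrict E (fun kk => by
      show δ (ιK kk, 0) = 0
      rw [hδa]
      show m (ιK kk) - t 0 = 0
      rw [hmι kk, map_zero]; abel))
  let ρ : EM ⟶ P := ModuleCat.ofHom ((LinearMap.snd Λ ↥A ↥P).comp E.subtype)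
  have hκinj : Function.Injective κ := by
    intro kk kk' hkk
    apply hι
    exact congrArg Prod.fst (congrArg Subtype.val hkk)
  have hρsurj : Function.Surjective ρ := by
    intro pp
    obtain ⟨aa, haa⟩ := hm (t pp)
    refine ⟨⟨(aa, pp), ?_⟩, rfl⟩
    show δ (aa, pp) = 0
    rw [hδa]
    show m aa - t pp = 0
    rw [haa]; abel
  have hexact : Function.Exact κ ρ := by
    rintro ⟨⟨aa, pp⟩, hmem⟩
    constructor
    · intro hz
      have hpp : pp = 0 := hz
      have hma : m aa = 0 := by
        have h' : δ (aa, pp) = 0 := hmem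
        rw [hδa] at h'
        show m aa = 0
        rw [hpp] at h'
        simpa using h'
      obtain ⟨kk, hk⟩ := (hex aa).mp hma
      refine ⟨kk, Subtype.ext (Prod.ext hk ?_)⟩
      show (0 : ↥P) = pp
      rw [hpp]
    · rintro ⟨kk, hk⟩
      rw [← hk]
      rfl
  have hE : EM ∈ C := hCext K EM P κ ρ hK hP.1 ⟨hκinj, hρsurj, hexact⟩
  obtain ⟨s, hs⟩ := hP.2 K EM hK hE κ ρ ⟨hκinj, hρsurj, hexact⟩
  refine ⟨ModuleCat.ofHom (((LinearMap.fst Λ ↥A ↥P).comp E.subtype).comp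
    (s.hom : ↥P →ₗ[Λ] ↥EM)), ?_⟩
  ext pp
  let z : ↥E := s pp
  show m (z.1).1 = t pp
  have hz1 : δ (z : ↥A × ↥P) = 0 := z.2
  rw [hδa] at hz1
  have hz2 : (z : ↥A × ↥P).2 = pp := hom_app_eq hs pp
  rw [hz2] at hz1
  have : m (z.1).1 - t pp = 0 := hz1
  linear_combination (norm := abel) this

/-- The quotient of `W × U` by the graph-like image of `V` is an extension of `X'` by `U`. -/
lemma quotMem (hCext : ClosedUnderExtensions C)
    {V W U X' : ModuleCat.{u} Λ} (α : V ⟶ W) (β : V ⟶ U) (q : W ⟶ X')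
    (hU : U ∈ C) (hX' : X' ∈ C) (hses : ShortExactSeq α q) :
    ModuleCat.of Λ ((↥W × ↥U) ⧸
      LinearMap.range (LinearMap.prod (α : ↥V →ₗ[Λ] ↥W) (β : ↥V →ₗ[Λ] ↥U))) ∈ C := by
  obtain ⟨hα, hq, hex⟩ := hses
  set θ : ↥V →ₗ[Λ] ↥W × ↥U := LinearMap.prod (α : ↥V →ₗ[Λ] ↥W) (β : ↥V →ₗ[Λ] ↥U) with hθ
  have hθa : ∀ v : ↥V, θ v = (α v, β v) := fun v => rfl
  set R : Submodule Λ (↥W × ↥U) := LinearMap.range θ with hR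
  let Q : ModuleCat.{u} Λ := ModuleCat.of Λ ((↥W × ↥U) ⧸ R)
  let ι : U ⟶ Q := ModuleCat.ofHom (R.mkQ.comp (LinearMap.inr Λ ↥W ↥U))
  have hqα : ∀ v : ↥V, q (α v) = 0 := fun v => (hex (α v)).mpr ⟨v, rfl⟩
  have hkill : ∀ x ∈ R, ((q : ↥W →ₗ[Λ] ↥X').comp (LinearMap.fst Λ ↥W ↥U)) x = 0 := by
    rintro x ⟨v, rfl⟩
    exact hqα v
  let τ : Q ⟶ X' := ModuleCat.ofHom
    (R.liftQ ((q : ↥W →ₗ[Λ] ↥X').comp (LinearMap.fst Λ ↥W ↥U)) hkill)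
  have hιinj : Function.Injective ι := by
    intro x y hxy
    have hmem : ((0 : ↥W), x) - ((0 : ↥W), y) ∈ R := (Submodule.Quotient.eq R).mp hxy
    obtain ⟨v, hv⟩ := hmem
    rw [hθa v] at hv
    have hv1 : α v = 0 := by have := congrArg Prod.fst hv; simpa using this
    have hv0 : v = 0 := hα (by simpa using hv1)
    have hv2 : β v = x - y := by have := congrArg Prod.snd hv; simpa using this
    rw [hv0, map_zero] at hv2
    linear_combination (norm := abel) -hv2
  have hτsurj : Function.Surjective τ := by
    intro x'
    obtain ⟨w, rfl⟩ := hq x'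
    exact ⟨Submodule.Quotient.mk (w, 0), rfl⟩
  have hexact : Function.Exact ι τ := by
    intro d
    obtain ⟨⟨w, uu⟩, rfl⟩ := Submodule.Quotient.mk_surjective R d
    constructor
    · intro hd
      have hw : q w = 0 := hd
      obtain ⟨v, hv⟩ := (hex w).mp hw
      refine ⟨uu - β v, ?_⟩
      show Submodule.Quotient.mk ((0 : ↥W), uu - β v) = Submodule.Quotient.mk (w, uu)
      rw [Submodule.Quotient.eq]
      refine ⟨-v, ?_⟩
      rw [hθa (-v)]
      apply Prod.ext
      · show α (-v) = 0 - w
        rw [map_neg, hv]; abel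
      · show β (-v) = (uu - β v) - uu
        rw [map_neg]; abel
    · rintro ⟨uu', huu⟩
      rw [← huu]
      show q 0 = 0
      exact map_zero _
  exact hCext U Q X' ι τ hU hX' ⟨hιinj, hτsurj, hexact⟩

/-- The kernel of a combined map `W × U → V` is an extension of `U` by `K'`. -/
lemma kerMem (hCext : ClosedUnderExtensions C)
    {V W U K' : ModuleCat.{u} Λ} (pk : K' ⟶ W) (p : W ⟶ V) (γ : U ⟶ V)
    (hK' : K' ∈ C) (hU : U ∈ C) (hses : ShortExactSeq pk p) :
    ModuleCat.of Λ ↥(LinearMap.ker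
      (((p : ↥W →ₗ[Λ] ↥V).comp (LinearMap.fst Λ ↥W ↥U)) +
       ((γ : ↥U →ₗ[Λ] ↥V).comp (LinearMap.snd Λ ↥W ↥U)))) ∈ C := by
  obtain ⟨hpk, hp, hex⟩ := hses
  set δ : ↥W × ↥U →ₗ[Λ] ↥V :=
    ((p : ↥W →ₗ[Λ] ↥V).comp (LinearMap.fst Λ ↥W ↥U)) +
      ((γ : ↥U →ₗ[Λ] ↥V).comp (LinearMap.snd Λ ↥W ↥U)) with hδ
  have hδa : ∀ x : ↥W × ↥U, δ x = p x.1 + γ x.2 := fun x => rfl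
  set N : Submodule Λ (↥W × ↥U) := LinearMap.ker δ with hN
  let NM : ModuleCat.{u} Λ := ModuleCat.of Λ ↥N
  have hppk : ∀ kk : ↥K', p (pk kk) = 0 := fun kk => (hex (pk kk)).mpr ⟨kk, rfl⟩
  let κ : K' ⟶ NM := ModuleCat.ofHom
    ((LinearMap.prod (pk : ↥K' →ₗ[Λ] ↥W) 0).codRestrict N (fun kk => by
      show δ (pk kk, 0) = 0
      rw [hδa]
      show p (pk kk) + γ 0 = 0
      rw [hppk kk, map_zero]; abel))
  let ρ : NM ⟶ U := ModuleCat.ofHom ((LinearMap.snd Λ ↥W ↥U).comp N.subtype)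
  have hκinj : Function.Injective κ := by
    intro kk kk' hkk
    apply hpk
    exact congrArg Prod.fst (congrArg Subtype.val hkk)
  have hρsurj : Function.Surjective ρ := by
    intro uu
    obtain ⟨w, hw⟩ := hp (-(γ uu))
    refine ⟨⟨(w, uu), ?_⟩, rfl⟩
    show δ (w, uu) = 0
    rw [hδa]
    show p w + γ uu = 0
    rw [hw]; abel
  have hexact : Function.Exact κ ρ := by
    rintro ⟨⟨w, uu⟩, hmem⟩
    constructor
    · intro hz
      have huu : uu = 0 := hz
      have hpw : p w = 0 := by
        have h' : δ (w, uu) = 0 := hmem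
        rw [hδa] at h'
        show p w = 0
        rw [huu] at h'
        simpa using h'
      obtain ⟨kk, hk⟩ := (hex w).mp hpw
      refine ⟨kk, Subtype.ext (Prod.ext hk ?_)⟩
      show (0 : ↥U) = uu
      rw [huu]
    · rintro ⟨kk, hk⟩
      rw [← hk]
      rfl
  exact hCext K' NM U κ ρ hK' hU ⟨hκinj, hρsurj, hexact⟩

end Helpers
section Main
variable {Λ : Type u} [Ring Λ] {C : Set (ModuleCat.{u} Λ)}

lemma rightSMonoApprox (k : Type u) [Field k] [Algebra k Λ] [FiniteDimensional k Λ]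
    (hCfd : ∀ M ∈ C, Module.Finite Λ M)
    (hCiso : ClosedUnderIso C) (hCsum : ClosedUnderSums C) (hCext : ClosedUnderExtensions C)
    (hCcontra : ContravariantlyFinite C) (hCinj : EnoughCInjectives C)
    (a : Arrow (ModuleCat.{u} Λ)) (h1 : Module.Finite Λ a.left) (h2 : Module.Finite Λ a.right) :
    ∃ (b : Arrow (ModuleCat.{u} Λ)) (g : b ⟶ a), IsRightApprox (SMono C) g := by
  obtain ⟨CY, cY, hCY, hfacY⟩ := hCcontra a.right h2
  let fl : ↥a.left →ₗ[Λ] ↥a.right := a.hom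
  -- the pullback of a.hom and cY
  set pb : ↥a.left × ↥CY →ₗ[Λ] ↥a.right :=
    (fl.comp (LinearMap.fst Λ ↥a.left ↥CY)) -
      ((cY : ↥CY →ₗ[Λ] ↥a.right).comp (LinearMap.snd Λ ↥a.left ↥CY)) with hpb
  have hpba : ∀ x : ↥a.left × ↥CY, pb x = fl x.1 - cY x.2 := fun x => rfl
  set PM : Submodule Λ (↥a.left × ↥CY) := LinearMap.ker pb with hPM
  haveI : Module.Finite Λ ↥CY := hCfd _ hCY
  haveI : Module.Finite Λ (↥a.left × ↥CY) := Module.Finite.prod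
  have finP : Module.Finite Λ ↥PM := finSub k inferInstance PM
  obtain ⟨CP, cP, hCP, hfacP⟩ := hCcontra (ModuleCat.of Λ ↥PM) finP
  let cPl : ↥CP →ₗ[Λ] ↥PM := cP.hom
  let a₀ : CP ⟶ a.left := ModuleCat.ofHom
    ((LinearMap.fst Λ ↥a.left ↥CY).comp (PM.subtype.comp cPl))
  let b₀ : CP ⟶ CY := ModuleCat.ofHom
    ((LinearMap.snd Λ ↥a.left ↥CY).comp (PM.subtype.comp cPl))
  have hPrel : ∀ pp : ↥CP, fl (a₀ pp) = cY (b₀ pp) := by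
    intro pp
    have hmem : pb ((cPl pp : ↥PM) : ↥a.left × ↥CY) = 0 := LinearMap.mem_ker.mp (cPl pp).2
    rw [hpba] at hmem
    have h' : fl (a₀ pp) - cY (b₀ pp) = 0 := hmem
    linear_combination (norm := abel) h'
  obtain ⟨I, X', hI, hX', e, q, hseq⟩ := hCinj CP hCP
  set jl : ↥CP →ₗ[Λ] ↥I × ↥CY :=
    LinearMap.prod (e : ↥CP →ₗ[Λ] ↥I) (b₀ : ↥CP →ₗ[Λ] ↥CY) with hjl
  let T : ModuleCat.{u} Λ := ModuleCat.of Λ (↥I × ↥CY)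
  have hT : T ∈ C := prodMem hCiso hCsum hI.1 hCY
  let j : CP ⟶ T := ModuleCat.ofHom jl
  have hjinj : Function.Injective jl := by
    intro x y hxy
    exact hseq.1 (congrArg Prod.fst hxy)
  have hcoker : ModuleCat.of Λ ((↥I × ↥CY) ⧸ LinearMap.range jl) ∈ C :=
    quotMem hCext e b₀ q hCY hX' hseq
  have hses_j : ShortExactSeq (ModuleCat.ofHom jl) (ModuleCat.ofHom (LinearMap.range jl).mkQ) :=
    ses_mkQ jl hjinj
  have hinfl : IsInflation C j :=
    ⟨hCP, hT, hjinj, ModuleCat.of Λ ((↥I × ↥CY) ⧸ LinearMap.range jl), hcoker,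
      ModuleCat.ofHom (LinearMap.range jl).mkQ, hses_j⟩
  have hbmem : Arrow.mk j ∈ SMono C := hinfl
  let φ₂ : T ⟶ a.right := ModuleCat.ofHom
    ((cY : ↥CY →ₗ[Λ] ↥a.right).comp (LinearMap.snd Λ ↥I ↥CY))
  have hsq : a₀ ≫ a.hom = (Arrow.mk j).hom ≫ φ₂ := by
    ext pp
    exact hPrel pp
  refine ⟨Arrow.mk j, Arrow.homMk _ _ hsq, hbmem, ?_⟩
  rintro W ⟨hA, hB, hminj, Z, hZ, σ, ses_m⟩ u
  obtain ⟨h, hh⟩ := hfacY W.right hB u.right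
  have husq : ∀ x : ↥W.left, fl (u.left x) = u.right (W.hom x) :=
    fun x => hom_app_eq (Arrow.w u) x
  have hmemP : ∀ x : ↥W.left, ((u.left x, h (W.hom x)) : ↥a.left × ↥CY) ∈ PM := by
    intro x
    rw [hPM, LinearMap.mem_ker]
    rw [hpba]
    show fl (u.left x) - cY (h (W.hom x)) = 0
    have h2' : cY (h (W.hom x)) = u.right (W.hom x) := hom_app_eq hh (W.hom x)
    rw [h2', husq x]
    abel
  set vP : ↥W.left →ₗ[Λ] ↥PM :=
    (LinearMap.prod (u.left : ↥W.left →ₗ[Λ] ↥a.left)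
      ((h : ↥W.right →ₗ[Λ] ↥CY).comp (W.hom : ↥W.left →ₗ[Λ] ↥W.right))).codRestrict PM
      (fun x => hmemP x) with hvP
  obtain ⟨v, hv⟩ := hfacP W.left hA (ModuleCat.ofHom vP)
  have hva : ∀ x : ↥W.left, ((cPl (v x) : ↥PM) : ↥a.left × ↥CY) = (u.left x, h (W.hom x)) := by
    intro x
    have h'' : cPl (v x) = vP x := hom_app_eq hv x
    rw [h'']
    rfl
  obtain ⟨w₁, hw₁⟩ := extendAlongInflation hCext hI hZ W.hom σ ses_m (v ≫ e)
  let v₂ : W.right ⟶ T := ModuleCat.ofHom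
    (LinearMap.prod (w₁ : ↥W.right →ₗ[Λ] ↥I) (h : ↥W.right →ₗ[Λ] ↥CY))
  have hvsq : v ≫ (Arrow.mk j).hom = W.hom ≫ v₂ := by
    ext x
    show jl (v x) = (w₁ (W.hom x), h (W.hom x))
    apply Prod.ext
    · show e (v x) = w₁ (W.hom x)
      exact (hom_app_eq hw₁ x).symm
    · show b₀ (v x) = h (W.hom x)
      show ((cPl (v x) : ↥PM) : ↥a.left × ↥CY).2 = h (W.hom x)
      rw [hva x]
  refine ⟨Arrow.homMk _ _ hvsq, ?_⟩
  apply Arrow.hom_ext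
  · show v ≫ a₀ = u.left
    ext x
    show ((cPl (v x) : ↥PM) : ↥a.left × ↥CY).1 = u.left x
    rw [hva x]
  · show v₂ ≫ φ₂ = u.right
    ext x
    exact hom_app_eq hh x

lemma leftFEpiApprox (k : Type u) [Field k] [Algebra k Λ] [FiniteDimensional k Λ]
    (hCfd : ∀ M ∈ C, Module.Finite Λ M)
    (hCiso : ClosedUnderIso C) (hCsum : ClosedUnderSums C) (hCext : ClosedUnderExtensions C)
    (hCcov : CovariantlyFinite C) (hCproj : EnoughCProjectives C)
    (a : Arrow (ModuleCat.{u} Λ)) (h1 : Module.Finite Λ a.left) (h2 : Module.Finite Λ a.right) :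
    ∃ (b : Arrow (ModuleCat.{u} Λ)) (g : a ⟶ b), IsLeftApprox (FEpi C) g := by
  obtain ⟨CX, c, hCX, hfacX⟩ := hCcov a.left h1
  let fl : ↥a.left →ₗ[Λ] ↥a.right := a.hom
  let cl : ↥a.left →ₗ[Λ] ↥CX := c
  set po : ↥a.left →ₗ[Λ] ↥CX × ↥a.right := LinearMap.prod cl (-fl) with hpo
  have hpoa : ∀ x : ↥a.left, po x = (cl x, -(fl x)) := fun _ => rfl
  set W₀ : Submodule Λ (↥CX × ↥a.right) := LinearMap.range po with hW₀
  let Q : ModuleCat.{u} Λ := ModuleCat.of Λ ((↥CX × ↥a.right) ⧸ W₀)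
  haveI : Module.Finite Λ ↥CX := hCfd _ hCX
  haveI : Module.Finite Λ (↥CX × ↥a.right) := Module.Finite.prod
  have finQ : Module.Finite Λ ((↥CX × ↥a.right) ⧸ W₀) :=
    Module.Finite.of_surjective W₀.mkQ (Submodule.mkQ_surjective _)
  obtain ⟨CQ, cQ, hCQ, hfacQ⟩ := hCcov Q finQ
  obtain ⟨P, K', hP, hK', pk, p, ses_p⟩ := hCproj CQ hCQ
  let cQl : ↥Q →ₗ[Λ] ↥CQ := cQ.hom
  let qCc : ↥CX →ₗ[Λ] ↥CQ := cQl.comp (W₀.mkQ.comp (LinearMap.inl Λ ↥CX ↥a.right))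
  set δ : ↥P × ↥CX →ₗ[Λ] ↥CQ :=
    ((p : ↥P →ₗ[Λ] ↥CQ).comp (LinearMap.fst Λ ↥P ↥CX)) +
      (qCc.comp (LinearMap.snd Λ ↥P ↥CX)) with hδ
  have hδa : ∀ x : ↥P × ↥CX, δ x = p x.1 + qCc x.2 := fun _ => rfl
  have hpsurj : Function.Surjective p := ses_p.2.1
  have hδsurj : Function.Surjective δ := by
    intro z
    obtain ⟨w, hw⟩ := hpsurj z
    refine ⟨(w, 0), ?_⟩
    rw [hδa]
    show p w + qCc 0 = z
    rw [map_zero, add_zero, hw]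
  let S₀ : ModuleCat.{u} Λ := ModuleCat.of Λ (↥P × ↥CX)
  have hS₀ : S₀ ∈ C := prodMem hCiso hCsum hP.1 hCX
  let j : S₀ ⟶ CQ := ModuleCat.ofHom δ
  have hkermem : ModuleCat.of Λ ↥(LinearMap.ker δ) ∈ C :=
    kerMem hCext pk p (ModuleCat.ofHom qCc) hK' hCX ses_p
  have hses_j : ShortExactSeq (ModuleCat.ofHom (LinearMap.ker δ).subtype)
      (ModuleCat.ofHom δ) := ses_ker δ hδsurj
  have hdefl : IsDeflation C j :=
    ⟨hS₀, hCQ, hδsurj, ModuleCat.of Λ ↥(LinearMap.ker δ), hkermem,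
      ModuleCat.ofHom (LinearMap.ker δ).subtype, hses_j⟩
  have hbmem : Arrow.mk j ∈ FEpi C := hdefl
  let gl : a.left ⟶ S₀ := ModuleCat.ofHom (LinearMap.prod 0 cl)
  let gr : a.right ⟶ CQ := ModuleCat.ofHom
    (cQl.comp (W₀.mkQ.comp (LinearMap.inr Λ ↥CX ↥a.right)))
  have hsq : gl ≫ (Arrow.mk j).hom = a.hom ≫ gr := by
    ext x
    show δ (0, cl x) = cQl (Submodule.Quotient.mk (0, fl x))
    rw [hδa]
    show p 0 + cQl (Submodule.Quotient.mk (cl x, 0)) = cQl (Submodule.Quotient.mk (0, fl x))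
    rw [map_zero, zero_add]
    congr 1
    rw [Submodule.Quotient.eq]
    refine ⟨x, ?_⟩
    rw [hpoa]
    apply Prod.ext
    · show cl x = cl x - 0; abel
    · show -(fl x) = 0 - fl x; abel
  refine ⟨Arrow.mk j, Arrow.homMk _ _ hsq, hbmem, ?_⟩
  rintro W ⟨hA, hB, hmsurj, K, hK, ιK, ses_m⟩ u
  obtain ⟨h, hh⟩ := hfacX W.left hA u.left
  let ml : ↥W.left →ₗ[Λ] ↥W.right := W.hom
  let url : ↥a.right →ₗ[Λ] ↥W.right := u.right
  let ull : ↥a.left →ₗ[Λ] ↥W.left := u.left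
  let hl : ↥CX →ₗ[Λ] ↥W.left := h
  have husq : ∀ x : ↥a.left, ml (ull x) = url (fl x) :=
    fun x => hom_app_eq (Arrow.w u) x
  set θing : ↥CX × ↥a.right →ₗ[Λ] ↥W.right := LinearMap.coprod (ml.comp hl) url with hθing
  have hθa : ∀ x : ↥CX × ↥a.right, θing x = ml (hl x.1) + url x.2 := fun _ => rfl
  have hkill : ∀ x ∈ W₀, θing x = 0 := by
    rintro x ⟨y, rfl⟩
    rw [hpoa, hθa]
    show ml (hl (cl y)) + url (-(fl y)) = 0
    have hcy : hl (cl y) = ull y := hom_app_eq hh y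
    rw [hcy, map_neg, husq y]
    abel
  let θB : Q ⟶ W.right := ModuleCat.ofHom (W₀.liftQ θing hkill)
  obtain ⟨g', hg'⟩ := hfacQ W.right hB θB
  obtain ⟨r, hr⟩ := liftAlongDeflation hCext hP hK ιK W.hom ses_m (p ≫ g')
  let rl : ↥P →ₗ[Λ] ↥W.left := r
  let g'l : ↥CQ →ₗ[Λ] ↥W.right := g'
  let vl : S₀ ⟶ W.left := ModuleCat.ofHom (LinearMap.coprod rl hl)
  have hvsq : vl ≫ W.hom = (Arrow.mk j).hom ≫ g' := by
    refine ModuleCat.hom_ext (LinearMap.ext fun x => ?_)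
    show ml (rl x.1 + hl x.2) = g'l (δ x)
    rw [map_add, hδa, map_add]
    congr 1
    · exact hom_app_eq hr x.1
    · have h1' : g'l (qCc x.2) = θB (Submodule.Quotient.mk (x.2, 0)) :=
        hom_app_eq hg' (Submodule.Quotient.mk (x.2, 0))
      rw [h1']
      show ml (hl x.2) = ml (hl x.2) + url 0
      rw [map_zero, add_zero]
  refine ⟨Arrow.homMk _ _ hvsq, ?_⟩
  apply Arrow.hom_ext
  · show gl ≫ vl = u.left
    ext x
    show rl 0 + hl (cl x) = ull x
    rw [map_zero, zero_add]
    exact hom_app_eq hh x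
  · show gr ≫ g' = u.right
    ext y
    have h1' : g'l (cQl (Submodule.Quotient.mk ((0 : ↥CX), y)))
        = θB (Submodule.Quotient.mk (0, y)) := hom_app_eq hg' _
    show g'l (cQl (Submodule.Quotient.mk (0, y))) = url y
    rw [h1']
    show ml (hl 0) + url y = url y
    rw [map_zero, map_zero, zero_add]

lemma rightFEpiApprox (k : Type u) [Field k] [Algebra k Λ] [FiniteDimensional k Λ]
    (hCfd : ∀ M ∈ C, Module.Finite Λ M)
    (hCiso : ClosedUnderIso C) (hCsum : ClosedUnderSums C) (hCext : ClosedUnderExtensions C)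
    (hCcontra : ContravariantlyFinite C) (hCinj : EnoughCInjectives C)
    (a : Arrow (ModuleCat.{u} Λ)) (h1 : Module.Finite Λ a.left) (h2 : Module.Finite Λ a.right) :
    ∃ (b : Arrow (ModuleCat.{u} Λ)) (g : b ⟶ a), IsRightApprox (FEpi C) g := by
  obtain ⟨CX, cX, hCX, hfacX⟩ := hCcontra a.left h1
  let fl : ↥a.left →ₗ[Λ] ↥a.right := a.hom
  let cXl : ↥CX →ₗ[Λ] ↥a.left := cX
  set L : Submodule Λ ↥CX := LinearMap.ker (fl.comp cXl) with hL
  haveI : Module.Finite Λ ↥CX := hCfd _ hCX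
  have finL : Module.Finite Λ ↥L := finSub k inferInstance L
  obtain ⟨CL, cL, hCL, hfacL⟩ := hCcontra (ModuleCat.of Λ ↥L) finL
  let cLl : ↥CL →ₗ[Λ] ↥L := cL.hom
  let dl : ↥CL →ₗ[Λ] ↥CX := L.subtype.comp cLl
  obtain ⟨I, X', hI, hX', e, q, hseq⟩ := hCinj CL hCL
  set θ : ↥CL →ₗ[Λ] ↥I × ↥CX := LinearMap.prod (e : ↥CL →ₗ[Λ] ↥I) dl with hθdef
  have hθa : ∀ x : ↥CL, θ x = (e x, dl x) := fun _ => rfl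
  have hθinj : Function.Injective θ := fun x y hxy => hseq.1 (congrArg Prod.fst hxy)
  let A₀ : ModuleCat.{u} Λ := ModuleCat.of Λ (↥I × ↥CX)
  have hA₀ : A₀ ∈ C := prodMem hCiso hCsum hI.1 hCX
  let B₀ : ModuleCat.{u} Λ := ModuleCat.of Λ ((↥I × ↥CX) ⧸ LinearMap.range θ)
  have hB₀ : B₀ ∈ C := quotMem hCext e (ModuleCat.ofHom dl) q hCX hX' hseq
  let j : A₀ ⟶ B₀ := ModuleCat.ofHom (LinearMap.range θ).mkQ
  have hjsurj : Function.Surjective ((LinearMap.range θ).mkQ) := Submodule.mkQ_surjective _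
  have hses_j : ShortExactSeq (ModuleCat.ofHom θ)
      (ModuleCat.ofHom (LinearMap.range θ).mkQ) := ses_mkQ θ hθinj
  have hdefl : IsDeflation C j := ⟨hA₀, hB₀, hjsurj, CL, hCL, ModuleCat.ofHom θ, hses_j⟩
  have hbmem : Arrow.mk j ∈ FEpi C := hdefl
  let α : A₀ ⟶ a.left := ModuleCat.ofHom (cXl.comp (LinearMap.snd Λ ↥I ↥CX))
  have hkillβ : ∀ x ∈ LinearMap.range θ,
      (fl.comp (cXl.comp (LinearMap.snd Λ ↥I ↥CX))) x = 0 := by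
    rintro x ⟨v, rfl⟩
    rw [hθa]
    show (fl.comp cXl) ((cLl v : ↥L) : ↥CX) = 0
    exact LinearMap.mem_ker.mp (cLl v).2
  let β : B₀ ⟶ a.right := ModuleCat.ofHom
    ((LinearMap.range θ).liftQ (fl.comp (cXl.comp (LinearMap.snd Λ ↥I ↥CX))) hkillβ)
  have hsq : α ≫ a.hom = (Arrow.mk j).hom ≫ β := by
    ext x
    all_goals rfl
  refine ⟨Arrow.mk j, Arrow.homMk _ _ hsq, hbmem, ?_⟩
  rintro W ⟨hA, hB, hmsurj, K, hK, ιK, ses_m⟩ u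
  let ml : ↥W.left →ₗ[Λ] ↥W.right := W.hom
  let ull : ↥W.left →ₗ[Λ] ↥a.left := u.left
  let url : ↥W.right →ₗ[Λ] ↥a.right := u.right
  have husq : ∀ x : ↥W.left, fl (ull x) = url (ml x) :=
    fun x => hom_app_eq (Arrow.w u) x
  obtain ⟨v, hv⟩ := hfacX W.left hA u.left
  have hmι : ∀ kk : ↥K, ml (ιK kk) = 0 := fun kk => (ses_m.2.2 (ιK kk)).mpr ⟨kk, rfl⟩
  have hmemL : ∀ kk : ↥K, v (ιK kk) ∈ L := by
    intro kk
    rw [hL, LinearMap.mem_ker]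
    show fl (cXl (v (ιK kk))) = 0
    have hv' : cXl (v (ιK kk)) = ull (ιK kk) := hom_app_eq hv (ιK kk)
    rw [hv', husq (ιK kk), hmι kk, map_zero]
  let wKl : ↥K →ₗ[Λ] ↥L :=
    ((v : ↥W.left →ₗ[Λ] ↥CX).comp (ιK : ↥K →ₗ[Λ] ↥W.left)).codRestrict L hmemL
  obtain ⟨w, hw⟩ := hfacL K hK (ModuleCat.ofHom wKl)
  obtain ⟨hh, hhh⟩ := extendAlongInflation hCext hI hB ιK W.hom ses_m (w ≫ e)
  set v₁l : ↥W.left →ₗ[Λ] ↥I × ↥CX :=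
    LinearMap.prod (hh : ↥W.left →ₗ[Λ] ↥I) (v : ↥W.left →ₗ[Λ] ↥CX) with hv₁l
  have hkillK : ∀ x : ↥W.left, W.hom x = 0 → (LinearMap.range θ).mkQ (v₁l x) = 0 := by
    intro x hx
    obtain ⟨kk, hkk⟩ := (ses_m.2.2 x).mp hx
    rw [Submodule.mkQ_apply, Submodule.Quotient.mk_eq_zero]
    refine ⟨w kk, ?_⟩
    rw [hθa]
    apply Prod.ext
    · show e (w kk) = hh x
      rw [← hkk]
      exact (hom_app_eq hhh kk).symm
    · show ((cLl (w kk) : ↥L) : ↥CX) = v x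
      have hwc : cLl (w kk) = wKl kk := hom_app_eq hw kk
      rw [hwc]
      show v (ιK kk) = v x
      rw [hkk]
  obtain ⟨v₂l, hv₂⟩ := factorSurj (W.hom : ↥W.left →ₗ[Λ] ↥W.right) hmsurj
    (((LinearMap.range θ).mkQ).comp v₁l) (fun x hx => hkillK x hx)
  have hvsq : ModuleCat.ofHom v₁l ≫ (Arrow.mk j).hom = W.hom ≫ ModuleCat.ofHom v₂l := by
    ext x
    exact (LinearMap.congr_fun hv₂ x).symm
  refine ⟨Arrow.homMk _ _ hvsq, ?_⟩
  apply Arrow.hom_ext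
  · show ModuleCat.ofHom v₁l ≫ α = u.left
    ext x
    show cXl (v x) = ull x
    exact hom_app_eq hv x
  · show ModuleCat.ofHom v₂l ≫ β = u.right
    ext y
    obtain ⟨x, rfl⟩ := hmsurj y
    have hstep : v₂l (ml x) = (LinearMap.range θ).mkQ (v₁l x) := LinearMap.congr_fun hv₂ x
    show β (v₂l (ml x)) = url (ml x)
    rw [hstep]
    show fl (cXl (v x)) = url (ml x)
    have hv' : cXl (v x) = ull x := hom_app_eq hv x
    rw [hv']
    exact husq x

lemma leftSMonoApprox (k : Type u) [Field k] [Algebra k Λ] [FiniteDimensional k Λ]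
    (hCfd : ∀ M ∈ C, Module.Finite Λ M)
    (hCiso : ClosedUnderIso C) (hCsum : ClosedUnderSums C) (hCext : ClosedUnderExtensions C)
    (hCcov : CovariantlyFinite C) (hCproj : EnoughCProjectives C)
    (a : Arrow (ModuleCat.{u} Λ)) (h1 : Module.Finite Λ a.left) (h2 : Module.Finite Λ a.right) :
    ∃ (b : Arrow (ModuleCat.{u} Λ)) (g : a ⟶ b), IsLeftApprox (SMono C) g := by
  obtain ⟨CY, c, hCY, hfacY⟩ := hCcov a.right h2
  let fl : ↥a.left →ₗ[Λ] ↥a.right := a.hom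
  let cl : ↥a.right →ₗ[Λ] ↥CY := c
  set Rf : Submodule Λ ↥CY := LinearMap.range (cl.comp fl) with hRf
  let L' : ModuleCat.{u} Λ := ModuleCat.of Λ (↥CY ⧸ Rf)
  haveI : Module.Finite Λ ↥CY := hCfd _ hCY
  have finL' : Module.Finite Λ (↥CY ⧸ Rf) :=
    Module.Finite.of_surjective Rf.mkQ (Submodule.mkQ_surjective _)
  obtain ⟨CL, c', hCL, hfacL⟩ := hCcov L' finL'
  let c'l : (↥CY ⧸ Rf) →ₗ[Λ] ↥CL := c'.hom
  let dl : ↥CY →ₗ[Λ] ↥CL := c'l.comp Rf.mkQ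
  obtain ⟨P, K', hP, hK', pk, p, ses_p⟩ := hCproj CL hCL
  have hpsurj : Function.Surjective p := ses_p.2.1
  set δ : ↥P × ↥CY →ₗ[Λ] ↥CL :=
    ((p : ↥P →ₗ[Λ] ↥CL).comp (LinearMap.fst Λ ↥P ↥CY)) +
      ((-dl).comp (LinearMap.snd Λ ↥P ↥CY)) with hδ
  have hδa : ∀ x : ↥P × ↥CY, δ x = p x.1 + -(dl x.2) := fun _ => rfl
  have hδsurj : Function.Surjective δ := by
    intro z
    obtain ⟨w, hw⟩ := hpsurj z
    refine ⟨(w, 0), ?_⟩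
    rw [hδa]
    show p w + -(dl 0) = z
    rw [map_zero, hw]; abel
  let B₀ : ModuleCat.{u} Λ := ModuleCat.of Λ (↥P × ↥CY)
  have hB₀ : B₀ ∈ C := prodMem hCiso hCsum hP.1 hCY
  let A₀ : ModuleCat.{u} Λ := ModuleCat.of Λ ↥(LinearMap.ker δ)
  have hA₀ : A₀ ∈ C := kerMem hCext pk p (ModuleCat.ofHom (-dl)) hK' hCY ses_p
  let j : A₀ ⟶ B₀ := ModuleCat.ofHom (LinearMap.ker δ).subtype
  have hses_j : ShortExactSeq (ModuleCat.ofHom (LinearMap.ker δ).subtype)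
      (ModuleCat.ofHom δ) := ses_ker δ hδsurj
  have hinfl : IsInflation C j :=
    ⟨hA₀, hB₀, Submodule.injective_subtype _, CL, hCL, ModuleCat.ofHom δ, hses_j⟩
  have hbmem : Arrow.mk j ∈ SMono C := hinfl
  have hmemker : ∀ x : ↥a.left, ((0 : ↥P), cl (fl x)) ∈ LinearMap.ker δ := by
    intro x
    rw [LinearMap.mem_ker, hδa]
    have hmk : Rf.mkQ (cl (fl x)) = 0 := by
      rw [Submodule.mkQ_apply, Submodule.Quotient.mk_eq_zero]
      exact ⟨x, rfl⟩
    show p 0 + -(c'l (Rf.mkQ (cl (fl x)))) = 0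
    rw [hmk, map_zero, map_zero]; abel
  let α : a.left ⟶ A₀ := ModuleCat.ofHom
    ((LinearMap.prod 0 (cl.comp fl)).codRestrict (LinearMap.ker δ) hmemker)
  let β : a.right ⟶ B₀ := ModuleCat.ofHom (LinearMap.prod 0 cl)
  have hsq : α ≫ (Arrow.mk j).hom = a.hom ≫ β := by
    ext x
    rfl
  refine ⟨Arrow.mk j, Arrow.homMk _ _ hsq, hbmem, ?_⟩
  rintro W ⟨hA, hB, hminj, Z, hZ, σ, ses_m⟩ u
  let ml : ↥W.left →ₗ[Λ] ↥W.right := W.hom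
  let ull : ↥a.left →ₗ[Λ] ↥W.left := u.left
  let url : ↥a.right →ₗ[Λ] ↥W.right := u.right
  let σl : ↥W.right →ₗ[Λ] ↥Z := σ
  have husq : ∀ x : ↥a.left, ml (ull x) = url (fl x) :=
    fun x => hom_app_eq (Arrow.w u) x
  obtain ⟨h, hh⟩ := hfacY W.right hB u.right
  let hl : ↥CY →ₗ[Λ] ↥W.right := h
  have hσm : ∀ x : ↥W.left, σl (ml x) = 0 := fun x => (ses_m.2.2 (W.hom x)).mpr ⟨x, rfl⟩
  have hkillw : ∀ y ∈ Rf, (σl.comp hl) y = 0 := by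
    rintro y ⟨x, rfl⟩
    show σl (hl (cl (fl x))) = 0
    have h1' : hl (cl (fl x)) = url (fl x) := hom_app_eq hh (fl x)
    rw [h1', ← husq x]
    exact hσm (ull x)
  let w₀ : L' ⟶ Z := ModuleCat.ofHom (Rf.liftQ (σl.comp hl) hkillw)
  obtain ⟨w', hw'⟩ := hfacL Z hZ w₀
  let w'l : ↥CL →ₗ[Λ] ↥Z := w'
  let pl : ↥P →ₗ[Λ] ↥CL := p
  obtain ⟨r, hr⟩ := liftAlongDeflation hCext hP hA W.hom σ ses_m
    (ModuleCat.ofHom (-(w'l.comp pl)))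
  let rl : ↥P →ₗ[Λ] ↥W.right := r
  let v₂l : ↥P × ↥CY →ₗ[Λ] ↥W.right := LinearMap.coprod rl hl
  have hdw : ∀ cc : ↥CY, σl (hl cc) = w'l (dl cc) := by
    intro cc
    calc σl (hl cc) = w₀ (Rf.mkQ cc) := rfl
      _ = w'l (c'l (Rf.mkQ cc)) := (hom_app_eq hw' (Rf.mkQ cc)).symm
      _ = w'l (dl cc) := rfl
  have hrange : ∀ s : ↥(LinearMap.ker δ),
      v₂l (s : ↥P × ↥CY) ∈ LinearMap.range ml := by
    rintro ⟨⟨y, cc⟩, hmem⟩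
    have hδs : δ (y, cc) = 0 := hmem
    rw [hδa] at hδs
    have hσv : σl (v₂l (y, cc)) = 0 := by
      show σl (rl y + hl cc) = 0
      rw [map_add]
      have hrσ : σl (rl y) = -(w'l (pl y)) := hom_app_eq hr y
      rw [hrσ, hdw]
      have hpd : pl y = dl cc := by linear_combination (norm := abel) hδs
      show -(w'l (pl y)) + w'l (dl cc) = 0
      rw [hpd]; abel
    obtain ⟨x, hx⟩ := (ses_m.2.2 (v₂l (y, cc))).mp hσv
    exact ⟨x, hx⟩
  obtain ⟨v₁l, hv₁⟩ := factorInj ml hminj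
    (v₂l.comp (LinearMap.ker δ).subtype) (fun s => hrange s)
  have hvsq : ModuleCat.ofHom v₁l ≫ W.hom = (Arrow.mk j).hom ≫ ModuleCat.ofHom v₂l := by
    ext s
    exact LinearMap.congr_fun hv₁ s
  refine ⟨Arrow.homMk _ _ hvsq, ?_⟩
  apply Arrow.hom_ext
  · show α ≫ ModuleCat.ofHom v₁l = u.left
    ext x
    apply hminj
    have e1 : ml (v₁l (α x)) = v₂l ((0 : ↥P), cl (fl x)) := LinearMap.congr_fun hv₁ (α x)
    show ml (v₁l (α x)) = ml (ull x)
    rw [e1]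
    show rl 0 + hl (cl (fl x)) = ml (ull x)
    rw [map_zero, zero_add]
    have h1' : hl (cl (fl x)) = url (fl x) := hom_app_eq hh (fl x)
    rw [h1', ← husq x]
  · show β ≫ ModuleCat.ofHom v₂l = u.right
    ext y
    show rl 0 + hl (cl y) = url y
    rw [map_zero, zero_add]
    exact hom_app_eq hh y

end Main
/-- If `C` is functorially finite in `mod Λ` with enough `C`-projectives and
`C`-injectives, then `S(C)` and `F(C)` are functorially finite subcategories of the arrow
category of `mod Λ`. -/
theorem smono_fepi_functorially_finite
    (k : Type u) [Field k] (Λ : Type u) [Ring Λ] [Algebra k Λ] [FiniteDimensional k Λ]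
    (C : Set (ModuleCat.{u} Λ))
    (hCfd : ∀ M ∈ C, Module.Finite Λ M)
    (hC0 : ContainsZero C) (hCiso : ClosedUnderIso C)
    (hCsum : ClosedUnderSums C) (hCext : ClosedUnderExtensions C)
    (hCcontra : ContravariantlyFinite C) (hCcov : CovariantlyFinite C)
    (hCproj : EnoughCProjectives C) (hCinj : EnoughCInjectives C) :
    ∀ a : Arrow (ModuleCat.{u} Λ), Module.Finite Λ a.left → Module.Finite Λ a.right →
      (∃ (b : Arrow (ModuleCat.{u} Λ)) (g : b ⟶ a), IsRightApprox (SMono C) g) ∧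
      (∃ (b : Arrow (ModuleCat.{u} Λ)) (g : a ⟶ b), IsLeftApprox (SMono C) g) ∧
      (∃ (b : Arrow (ModuleCat.{u} Λ)) (g : b ⟶ a), IsRightApprox (FEpi C) g) ∧
      (∃ (b : Arrow (ModuleCat.{u} Λ)) (g : a ⟶ b), IsLeftApprox (FEpi C) g) := by
  intro a ha1 ha2
  exact ⟨rightSMonoApprox k hCfd hCiso hCsum hCext hCcontra hCinj a ha1 ha2,
    leftSMonoApprox k hCfd hCiso hCsum hCext hCcov hCproj a ha1 ha2,
    rightFEpiApprox k hCfd hCiso hCsum hCext hCcontra hCinj a ha1 ha2,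
    leftFEpiApprox k hCfd hCiso hCsum hCext hCcov hCproj a ha1 ha2⟩
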